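/- For every n×n Hankel matrix A there exist a permutation matrix P, a positive integer k, and irreducible Hankel matrices A_1,...,A_k such that P^T A P = diag(A_1,...,A_k), a block diagonal matrix. -/

import Mathlib

/-- `A` is a symmetric Toeplitz matrix: its `(i,j)`-entry depends only on `|i - j|`. -/
def IsSymmToeplitz {m : ℕ} (A : Matrix (Fin m) (Fin m) ℝ) : Prop :=
  ∀ i j k l : Fin m, ((i : ℤ) - (j : ℤ)).natAbs = ((k : ℤ) - (l : ℤ)).natAbs → A i j = A k l

/-- `A` is a Hankel matrix: its `(i,j)`-entry depends only on `i + j`. -/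
def IsHankel {m : ℕ} (A : Matrix (Fin m) (Fin m) ℝ) : Prop :=
  ∀ i j k l : Fin m, (i : ℕ) + (j : ℕ) = (k : ℕ) + (l : ℕ) → A i j = A k l

/-- `A` is reducible: some simultaneous permutation of its rows and columns puts it in
block upper triangular form `[[A₁, A₁₂], [0, A₂]]` with `A₁, A₂` square of order `≥ 1`. -/
def MatReducible {m : ℕ} (A : Matrix (Fin m) (Fin m) ℝ) : Prop :=
  ∃ (σ : Equiv.Perm (Fin m)) (r : ℕ), 0 < r ∧ r < m ∧
    ∀ i j : Fin m, r ≤ (σ i : ℕ) → (σ j : ℕ) < r → A i j = 0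

/-- `A` is irreducible iff it is not reducible. -/
def MatIrreducible {m : ℕ} (A : Matrix (Fin m) (Fin m) ℝ) : Prop :=
  ¬ MatReducible A

section Aux

variable {n m : ℕ}

lemma hankel_symm_aux {A : Matrix (Fin n) (Fin n) ℝ} (hA : IsHankel A) (i j : Fin n) :
    A i j = A j i := hA i j j i (Nat.add_comm _ _)

lemma key_step {A : Matrix (Fin n) (Fin n) ℝ} (hA : IsHankel A) (c : Fin m → Fin n)
    (hmono : StrictMono fun p => ((c p : Fin n) : ℕ))
    (hclosed : ∀ (p : Fin m) (w : Fin n), A (c p) w ≠ 0 → ∃ t, c t = w)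
    (a b : ℕ) (hb : b < m) (hab : a + 2 ≤ b) :
    A (c ⟨a, by omega⟩) (c ⟨b, hb⟩) = A (c ⟨a + 1, by omega⟩) (c ⟨b - 1, by omega⟩) := by
  have ha : a < m := by omega
  have ha1 : a + 1 < m := by omega
  have hb1 : b - 1 < m := by omega
  have ltc : ∀ (x y : Fin m), ((c x : Fin n) : ℕ) < ((c y : Fin n) : ℕ) → (x : ℕ) < (y : ℕ) :=
    fun x y h => hmono.lt_iff_lt.mp h
  have lec : ∀ (x y : Fin m), (x : ℕ) ≤ (y : ℕ) → ((c x : Fin n) : ℕ) ≤ ((c y : Fin n) : ℕ) :=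
    fun x y h => hmono.monotone h
  set U : ℕ := ((c ⟨a, ha⟩ : Fin n) : ℕ) with hU
  set U' : ℕ := ((c ⟨a + 1, ha1⟩ : Fin n) : ℕ) with hU'
  set V' : ℕ := ((c ⟨b - 1, hb1⟩ : Fin n) : ℕ) with hV'
  set V : ℕ := ((c ⟨b, hb⟩ : Fin n) : ℕ) with hV
  have hUU' : U < U' := hmono (Fin.mk_lt_mk.mpr (by omega))
  have hU'V' : U' ≤ V' := lec ⟨a + 1, ha1⟩ ⟨b - 1, hb1⟩ (show a + 1 ≤ b - 1 by omega)
  have hV'V : V' < V := hmono (Fin.mk_lt_mk.mpr (by omega))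
  have hVn : V < n := (c ⟨b, hb⟩).isLt
  have hU'n : U' < n := (c ⟨a + 1, ha1⟩).isLt
  by_cases h1 : A (c ⟨a, ha⟩) (c ⟨b, hb⟩) = 0
  · by_cases h2 : A (c ⟨a + 1, ha1⟩) (c ⟨b - 1, hb1⟩) = 0
    · rw [h1, h2]
    · -- reflection around s := U' + V'
      exfalso
      by_cases hcase : U' + V' < n + U
      · -- y1 := s - U is a valid index
        have hy1n : U' + V' - U < n := by omega
        have e1 : A (c ⟨a, ha⟩) ⟨U' + V' - U, hy1n⟩ = A (c ⟨a + 1, ha1⟩) (c ⟨b - 1, hb1⟩) :=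
          hA _ _ _ _ (show U + (U' + V' - U) = U' + V' by omega)
        obtain ⟨t, ht⟩ := hclosed ⟨a, ha⟩ _ (by rw [e1]; exact h2)
        have htv : ((c t : Fin n) : ℕ) = U' + V' - U := by rw [ht]
        have h3 : (⟨b - 1, hb1⟩ : Fin m) < t := ltc _ _ (by omega)
        have h3' : b - 1 < (t : ℕ) := h3
        have h4 : V ≤ ((c t : Fin n) : ℕ) := lec ⟨b, hb⟩ t (show b ≤ (t : ℕ) by omega)
        have hs1 : U + V ≤ U' + V' := by omega
        -- y2 := s - V is a valid index
        have hy2n : U' + V' - V < n := by omega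
        have e2 : A (c ⟨b, hb⟩) ⟨U' + V' - V, hy2n⟩ = A (c ⟨a + 1, ha1⟩) (c ⟨b - 1, hb1⟩) :=
          hA _ _ _ _ (show V + (U' + V' - V) = U' + V' by omega)
        obtain ⟨t', ht'⟩ := hclosed ⟨b, hb⟩ _ (by rw [e2]; exact h2)
        have htv' : ((c t' : Fin n) : ℕ) = U' + V' - V := by rw [ht']
        have h5 : t' < (⟨a + 1, ha1⟩ : Fin m) := ltc _ _ (by omega)
        have h5' : (t' : ℕ) < a + 1 := h5
        have h6 : ((c t' : Fin n) : ℕ) ≤ U := lec t' ⟨a, ha⟩ (show (t' : ℕ) ≤ a by omega)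
        have hs2 : U' + V' ≤ U + V := by omega
        -- so sums are equal, hence A u' v' = A u v = 0, contradiction with h2
        exact h2 ((hA _ _ _ _ (show U' + V' = U + V by omega)).trans h1)
      · -- impossible: s - V lands strictly between U and U'
        have hy2n : U' + V' - V < n := by omega
        have e2 : A (c ⟨b, hb⟩) ⟨U' + V' - V, hy2n⟩ = A (c ⟨a + 1, ha1⟩) (c ⟨b - 1, hb1⟩) :=
          hA _ _ _ _ (show V + (U' + V' - V) = U' + V' by omega)
        obtain ⟨t', ht'⟩ := hclosed ⟨b, hb⟩ _ (by rw [e2]; exact h2)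
        have htv' : ((c t' : Fin n) : ℕ) = U' + V' - V := by rw [ht']
        have h5 : t' < (⟨a + 1, ha1⟩ : Fin m) := ltc _ _ (by omega)
        have h7 : (⟨a, ha⟩ : Fin m) < t' := ltc _ _ (by omega)
        have h5' : (t' : ℕ) < a + 1 := h5
        have h7' : a < (t' : ℕ) := h7
        omega
  · -- reflection around s := U + V : shows U + V = U' + V'
    have hy1n : U + V - V' < n := by omega
    have e1 : A (c ⟨b - 1, hb1⟩) ⟨U + V - V', hy1n⟩ = A (c ⟨a, ha⟩) (c ⟨b, hb⟩) :=
      hA _ _ _ _ (show V' + (U + V - V') = U + V by omega)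
    obtain ⟨t, ht⟩ := hclosed ⟨b - 1, hb1⟩ _ (by rw [e1]; exact h1)
    have htv : ((c t : Fin n) : ℕ) = U + V - V' := by rw [ht]
    have h3 : (⟨a, ha⟩ : Fin m) < t := ltc _ _ (by omega)
    have h3' : a < (t : ℕ) := h3
    have h4 : U' ≤ ((c t : Fin n) : ℕ) := lec ⟨a + 1, ha1⟩ t (show a + 1 ≤ (t : ℕ) by omega)
    have hs1 : U' + V' ≤ U + V := by omega
    have hy2n : U + V - U' < n := by omega
    have e2 : A (c ⟨a + 1, ha1⟩) ⟨U + V - U', hy2n⟩ = A (c ⟨a, ha⟩) (c ⟨b, hb⟩) :=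
      hA _ _ _ _ (show U' + (U + V - U') = U + V by omega)
    obtain ⟨t', ht'⟩ := hclosed ⟨a + 1, ha1⟩ _ (by rw [e2]; exact h1)
    have htv' : ((c t' : Fin n) : ℕ) = U + V - U' := by rw [ht']
    have h5 : t' < (⟨b, hb⟩ : Fin m) := ltc _ _ (by omega)
    have h5' : (t' : ℕ) < b := h5
    have h6 : ((c t' : Fin n) : ℕ) ≤ V' := lec t' ⟨b - 1, hb1⟩ (show (t' : ℕ) ≤ b - 1 by omega)
    have hs2 : U + V ≤ U' + V' := by omega
    exact hA _ _ _ _ (show U + V = U' + V' by omega)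

lemma key_chain {A : Matrix (Fin n) (Fin n) ℝ} (hA : IsHankel A) (c : Fin m → Fin n)
    (hmono : StrictMono fun p => ((c p : Fin n) : ℕ))
    (hclosed : ∀ (p : Fin m) (w : Fin n), A (c p) w ≠ 0 → ∃ t, c t = w) :
    ∀ (j a b : ℕ) (hb : b < m) (h : a + 2 * j ≤ b),
      A (c ⟨a, by omega⟩) (c ⟨b, hb⟩) = A (c ⟨a + j, by omega⟩) (c ⟨b - j, by omega⟩) := by
  intro j
  induction j with
  | zero => intro a b hb h; rfl
  | succ j ih =>
    intro a b hb h
    have e1 := ih a b hb (by omega)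
    have e2 := key_step hA c hmono hclosed (a + j) (b - j) (by omega) (by omega)
    exact e1.trans e2

lemma key_hankel {A : Matrix (Fin n) (Fin n) ℝ} (hA : IsHankel A) (c : Fin m → Fin n)
    (hmono : StrictMono fun p => ((c p : Fin n) : ℕ))
    (hclosed : ∀ (p : Fin m) (w : Fin n), A (c p) w ≠ 0 → ∃ t, c t = w) :
    IsHankel (fun p q : Fin m => A (c p) (c q)) := by
  have hsym : ∀ i j : Fin n, A i j = A j i := hankel_symm_aux hA
  have main : ∀ p q p' q' : Fin m, (p : ℕ) ≤ q → (p' : ℕ) ≤ q' → (p : ℕ) ≤ p' →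
      (p : ℕ) + (q : ℕ) = (p' : ℕ) + (q' : ℕ) → A (c p) (c q) = A (c p') (c q') := by
    intro p q p' q' hpq hpq' hpp' hsum
    have hch := key_chain hA c hmono hclosed ((p' : ℕ) - p) p q q.isLt (by omega)
    have e1 : c ⟨(p : ℕ) + ((p' : ℕ) - (p : ℕ)), by omega⟩ = c p' :=
      congrArg c (Fin.ext (show (p : ℕ) + ((p' : ℕ) - (p : ℕ)) = (p' : ℕ) by omega))
    have e2 : c ⟨(q : ℕ) - ((p' : ℕ) - (p : ℕ)), by omega⟩ = c q' :=
      congrArg c (Fin.ext (show (q : ℕ) - ((p' : ℕ) - (p : ℕ)) = (q' : ℕ) by omega))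
    rw [e1, e2] at hch
    exact hch
  have main2 : ∀ p q p' q' : Fin m, (p : ℕ) ≤ q → (p' : ℕ) ≤ q' →
      (p : ℕ) + (q : ℕ) = (p' : ℕ) + (q' : ℕ) → A (c p) (c q) = A (c p') (c q') := by
    intro p q p' q' h1 h2 hs
    rcases le_total (p : ℕ) (p' : ℕ) with h | h
    · exact main p q p' q' h1 h2 h hs
    · exact (main p' q' p q h2 h1 h hs.symm).symm
  intro p q p' q' h
  rcases le_total (p : ℕ) (q : ℕ) with h1 | h1 <;> rcases le_total (p' : ℕ) (q' : ℕ) with h2 | h2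
  · exact main2 p q p' q' h1 h2 h
  · exact (main2 p q q' p' h1 h2 (by omega)).trans (hsym _ _)
  · exact (hsym _ _).trans (main2 q p p' q' h1 h2 (by omega))
  · exact ((hsym _ _).trans (main2 q p q' p' h1 h2 (by omega))).trans (hsym _ _)

lemma key_irr {A : Matrix (Fin n) (Fin n) ℝ} (hsym : ∀ i j, A i j = A j i)
    (c : Fin m → Fin n) (hinj : Function.Injective c)
    (hconn : ∀ p q : Fin m, Relation.EqvGen (fun i j => A i j ≠ 0) (c p) (c q))
    (hclosed : ∀ (p : Fin m) (w : Fin n), A (c p) w ≠ 0 → ∃ t, c t = w) :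
    MatIrreducible (fun p q : Fin m => A (c p) (c q)) := by
  rintro ⟨σ, r, hr0, hrm, hz⟩
  have hz' : ∀ i j : Fin m, (σ i : ℕ) < r → r ≤ (σ j : ℕ) → A (c i) (c j) = 0 := by
    intro i j hi hj
    have := hz j i hj hi
    simpa [hsym (c i) (c j)] using this
  have claim : ∀ v w : Fin n, Relation.EqvGen (fun i j => A i j ≠ 0) v w →
      ((∃ p, c p = v) ↔ (∃ q, c q = w)) ∧
      (∀ p q, c p = v → c q = w → ((σ p : ℕ) < r ↔ (σ q : ℕ) < r)) := by
    intro v w h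
    induction h with
    | rel v w hvw =>
      refine ⟨⟨?_, ?_⟩, ?_⟩
      · rintro ⟨p, rfl⟩; exact hclosed p w hvw
      · rintro ⟨q, rfl⟩
        exact hclosed q v (fun h0 => hvw (by rw [hsym]; exact h0))
      · rintro p q rfl rfl
        constructor
        · intro hp
          by_contra hq
          exact hvw (hz' p q hp (by omega))
        · intro hq
          by_contra hp
          exact hvw (hz p q (by omega) hq)
    | refl v =>
      exact ⟨Iff.rfl, fun p q hp hq => by rw [hinj (hp.trans hq.symm)]⟩
    | symm v w _ ih =>
      exact ⟨ih.1.symm, fun p q hp hq => (ih.2 q p hq hp).symm⟩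
    | trans u v w _ _ ih1 ih2 =>
      refine ⟨ih1.1.trans ih2.1, ?_⟩
      intro p q hp hq
      obtain ⟨t, ht⟩ := ih1.1.mp ⟨p, hp⟩
      exact (ih1.2 p t hp ht).trans (ih2.2 t q ht hq)
  have hm : 0 < m := by omega
  set p0 : Fin m := σ.symm ⟨0, by omega⟩ with hp0
  set q0 : Fin m := σ.symm ⟨r, hrm⟩ with hq0
  have h := (claim _ _ (hconn p0 q0)).2 p0 q0 rfl rfl
  rw [hp0, hq0] at h
  simp [Equiv.apply_symm_apply] at h
  omega

end Aux

section Build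

open scoped Classical

variable (n : ℕ) (A : Matrix (Fin n) (Fin n) ℝ)

/-- The setoid of connectivity on indices. -/
def cSetoid : Setoid (Fin n) :=
  ⟨Relation.EqvGen fun i j => A i j ≠ 0, Relation.EqvGen.is_equivalence _⟩

noncomputable instance : Fintype (Quotient (cSetoid n A)) :=
  @Quotient.fintype _ _ (cSetoid n A) fun _ _ => Classical.dec _

/-- Number of components. -/
noncomputable def kk : ℕ := Fintype.card (Quotient (cSetoid n A))

noncomputable def eq0 : Quotient (cSetoid n A) ≃ Fin (kk n A) := Fintype.equivFin _

noncomputable def compSet (i : Fin (kk n A)) : Finset (Fin n) :=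
  Finset.univ.filter fun v => eq0 n A (Quotient.mk (cSetoid n A) v) = i

noncomputable def dd (i : Fin (kk n A)) : ℕ := (compSet n A i).card

noncomputable def oIso (i : Fin (kk n A)) : Fin (dd n A i) ≃o {x // x ∈ compSet n A i} :=
  (compSet n A i).orderIsoOfFin rfl

noncomputable def cFun (i : Fin (kk n A)) (p : Fin (dd n A i)) : Fin n :=
  (oIso n A i p : Fin n)

lemma mem_compSet (i : Fin (kk n A)) (p : Fin (dd n A i)) :
    cFun n A i p ∈ compSet n A i := (oIso n A i p).2

lemma class_of (i : Fin (kk n A)) (p : Fin (dd n A i)) :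
    eq0 n A (Quotient.mk (cSetoid n A) (cFun n A i p)) = i := by
  have := mem_compSet n A i p
  simpa [compSet, Finset.mem_filter] using this

lemma cFun_strictMono (i : Fin (kk n A)) :
    StrictMono fun p => ((cFun n A i p : Fin n) : ℕ) := by
  intro a b hab
  have h := (oIso n A i).strictMono hab
  exact h

lemma cFun_inj (i : Fin (kk n A)) : Function.Injective (cFun n A i) :=
  fun a b h => (oIso n A i).injective (Subtype.coe_injective h)

lemma cFun_surjOn (i : Fin (kk n A)) (v : Fin n) (hv : v ∈ compSet n A i) :
    ∃ p, cFun n A i p = v :=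
  ⟨(oIso n A i).symm ⟨v, hv⟩, by simp [cFun]⟩

lemma cFun_closed (i : Fin (kk n A)) (p : Fin (dd n A i)) (w : Fin n)
    (hw : A (cFun n A i p) w ≠ 0) : ∃ t, cFun n A i t = w := by
  apply cFun_surjOn
  have h1 : Quotient.mk (cSetoid n A) (cFun n A i p) = Quotient.mk (cSetoid n A) w :=
    Quotient.sound (Relation.EqvGen.rel _ _ hw)
  simp only [compSet, Finset.mem_filter, Finset.mem_univ, true_and]
  rw [← h1]
  exact class_of n A i p

lemma cFun_conn (i : Fin (kk n A)) (p q : Fin (dd n A i)) :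
    Relation.EqvGen (fun x y => A x y ≠ 0) (cFun n A i p) (cFun n A i q) := by
  have h : Quotient.mk (cSetoid n A) (cFun n A i p) = Quotient.mk (cSetoid n A) (cFun n A i q) :=
    (eq0 n A).injective (by rw [class_of, class_of])
  exact Quotient.exact h

end Build

/-- The Frobenius normal form of a Hankel matrix: for every Hankel matrix `A` there are a
permutation of indices and irreducible Hankel blocks `A₁, ..., A_k` with
`PᵀAP = diag(A₁,...,A_k)`. -/
theorem stmt_12 (n : ℕ) (A : Matrix (Fin n) (Fin n) ℝ) (hA : IsHankel A) :
    ∃ (k : ℕ) (_ : 0 < k) (d : Fin k → ℕ)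
      (blocks : ∀ i : Fin k, Matrix (Fin (d i)) (Fin (d i)) ℝ)
      (e : (Σ i : Fin k, Fin (d i)) ≃ Fin n),
      (∀ x y : Σ i : Fin k, Fin (d i), A (e x) (e y) = Matrix.blockDiagonal' blocks x y) ∧
      (∀ i, IsHankel (blocks i)) ∧
      (∀ i, MatIrreducible (blocks i)) := by
  classical
  rcases Nat.eq_zero_or_pos n with hn | hn
  · subst hn
    refine ⟨1, one_pos, fun _ => 0, fun _ => (0 : Matrix (Fin 0) (Fin 0) ℝ),
      ⟨fun x => x.2.elim0, fun v => v.elim0, fun x => x.2.elim0, fun v => v.elim0⟩,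
      fun x => x.2.elim0, ?_, ?_⟩
    · intro i a; exact a.elim0
    · intro i h
      obtain ⟨σ, r, hr0, hrm, _⟩ := h
      have : r < 0 := hrm
      omega
  · have hsym : ∀ i j : Fin n, A i j = A j i := hankel_symm_aux hA
    have hk : 0 < kk n A := Fintype.card_pos_iff.mpr ⟨Quotient.mk (cSetoid n A) ⟨0, hn⟩⟩
    set f : (Σ i : Fin (kk n A), Fin (dd n A i)) → Fin n := fun x => cFun n A x.1 x.2 with hf
    have hbij : Function.Bijective f := by
      constructor
      · rintro ⟨i, p⟩ ⟨j, q⟩ h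
        simp only [hf] at h
        have hij : i = j := by
          rw [← class_of n A i p, ← class_of n A j q, h]
        subst hij
        have : p = q := cFun_inj n A i h
        rw [this]
      · intro v
        have hv : v ∈ compSet n A (eq0 n A (Quotient.mk (cSetoid n A) v)) := by
          simp only [compSet, Finset.mem_filter, Finset.mem_univ, true_and]
        obtain ⟨p, hp⟩ := cFun_surjOn n A _ v hv
        exact ⟨⟨_, p⟩, hp⟩
    refine ⟨kk n A, hk, dd n A, fun i p q => A (cFun n A i p) (cFun n A i q),
      Equiv.ofBijective f hbij, ?_, ?_, ?_⟩
    · rintro ⟨i, p⟩ ⟨j, q⟩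
      by_cases hij : i = j
      · subst hij
        exact (Matrix.blockDiagonal'_apply_eq (fun i p q => A (cFun n A i p) (cFun n A i q)) i p q).symm
      · refine Eq.trans ?_ (Matrix.blockDiagonal'_apply_ne _ _ _ hij).symm
        show A (cFun n A i p) (cFun n A j q) = 0
        by_contra h0
        apply hij
        rw [← class_of n A i p, ← class_of n A j q]
        exact congrArg (eq0 n A) (Quotient.sound (Relation.EqvGen.rel _ _ h0))
    · intro i
      exact key_hankel hA (cFun n A i) (cFun_strictMono n A i) (cFun_closed n A i)
    · intro i
      exact key_irr hsym (cFun n A i) (cFun_inj n A i) (cFun_conn n A i) (cFun_closed n A i)
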